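/- Suppose μ₁ < μ₂ and ρ = ρ̂₂. Then t* = 1/μ₂, the infimum of g(t,s) over (t,s) ∈ (0,∞)² equals 4μ₂ and is attained at (1/μ₂, 1/μ₂); moreover g(1/μ₂,1/μ₂) = g₂(1/μ₂) = 4μ₂, and 1/μ₂ is the unique minimizer of g₂(s) = (1+μ₂s)²/s over s ∈ (0,∞). -/

import Mathlib

open Matrix

/-- The covariance matrix of `(X₁(t), X₂(s))`. -/
noncomputable def covM (ρ t s : ℝ) : Matrix (Fin 2) (Fin 2) ℝ :=
  !![t, ρ * min t s; ρ * min t s, s]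

/-- The quadratic form `(x,y) Σ_{ts}⁻¹ (x,y)ᵀ`. -/
noncomputable def quadF (ρ t s x y : ℝ) : ℝ :=
  dotProduct ![x, y] ((covM ρ t s)⁻¹.mulVec ![x, y])

/-- `g(t,s) = inf{ (x,y) Σ_{ts}⁻¹ (x,y)ᵀ : x ≥ 1+μ₁t, y ≥ 1+μ₂s }`. -/
noncomputable def gFun (μ₁ μ₂ ρ t s : ℝ) : ℝ :=
  sInf { q : ℝ | ∃ x y : ℝ, 1 + μ₁ * t ≤ x ∧ 1 + μ₂ * s ≤ y ∧ q = quadF ρ t s x y }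

/-- `g₃(t,s)`: the quadratic form at the corner point `(1+μ₁t, 1+μ₂s)`. -/
noncomputable def g3Fun (μ₁ μ₂ ρ t s : ℝ) : ℝ :=
  quadF ρ t s (1 + μ₁ * t) (1 + μ₂ * s)

/-- `g₂(s) = (1+μ₂s)²/s`. -/
noncomputable def g2Fun (μ₂ s : ℝ) : ℝ := (1 + μ₂ * s) ^ 2 / s

lemma quadF_eq (ρ t s x y : ℝ) :
    quadF ρ t s x y =
      (s * x ^ 2 - 2 * (ρ * min t s) * x * y + t * y ^ 2) / (t * s - (ρ * min t s) ^ 2) := by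
  have hdet : (covM ρ t s).det = t * s - (ρ * min t s) ^ 2 := by
    simp [covM, Matrix.det_fin_two_of]; ring
  simp [quadF, Matrix.inv_def, Matrix.adjugate_fin_two_of, hdet, Ring.inverse_eq_inv',
    Matrix.mulVec, dotProduct, Fin.sum_univ_two, covM]
  ring

lemma det_pos (ρ t s : ℝ) (ht : 0 < t) (hs : 0 < s) (hρl : -1 < ρ) (hρu : ρ < 1) :
    0 < t * s - (ρ * min t s) ^ 2 := by
  have hρ : ρ ^ 2 < 1 := by nlinarith
  rcases le_total t s with h | h
  · rw [min_eq_left h]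
    nlinarith [pow_pos ht 2, mul_le_mul_of_nonneg_left h ht.le]
  · rw [min_eq_right h]
    nlinarith [pow_pos hs 2, mul_le_mul_of_nonneg_left h hs.le]

lemma g2_ge (μ₂ s : ℝ) (hμ : 0 < μ₂) (hs : 0 < s) : 4 * μ₂ ≤ g2Fun μ₂ s := by
  rw [g2Fun, le_div_iff₀ hs]; nlinarith [sq_nonneg (1 - μ₂ * s)]

lemma quadF_ge (μ₂ ρ t s x y : ℝ) (hμ : 0 < μ₂) (ht : 0 < t) (hs : 0 < s)
    (hρl : -1 < ρ) (hρu : ρ < 1) (hy : 1 + μ₂ * s ≤ y) :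
    4 * μ₂ ≤ quadF ρ t s x y := by
  have hd := det_pos ρ t s ht hs hρl hρu
  rw [quadF_eq]
  have h1 : y ^ 2 / s ≤ (s * x ^ 2 - 2 * (ρ * min t s) * x * y + t * y ^ 2) /
      (t * s - (ρ * min t s) ^ 2) := by
    rw [div_le_div_iff₀ hs hd]
    nlinarith [sq_nonneg (s * x - ρ * min t s * y)]
  refine le_trans (le_trans (g2_ge μ₂ s hμ hs) ?_) h1
  have hy0 : 0 < 1 + μ₂ * s := by nlinarith
  rw [g2Fun]
  gcongr <;> nlinarith

lemma gFun_ge (μ₁ μ₂ ρ t s : ℝ) (hμ1 : 0 < μ₁) (hμ2 : 0 < μ₂) (ht : 0 < t) (hs : 0 < s)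
    (hρl : -1 < ρ) (hρu : ρ < 1) : 4 * μ₂ ≤ gFun μ₁ μ₂ ρ t s := by
  apply le_csInf
  · exact ⟨quadF ρ t s (1 + μ₁ * t) (1 + μ₂ * s), 1 + μ₁ * t, 1 + μ₂ * s,
      le_refl _, le_refl _, rfl⟩
  · rintro b ⟨x, y, hx, hy, rfl⟩
    exact quadF_ge μ₂ ρ t s x y hμ2 ht hs hρl hρu hy

theorem stmt6 (μ₁ μ₂ ρ : ℝ) (hμ1 : 0 < μ₁) (hμ12 : μ₁ < μ₂)
    (hρl : -1 < ρ) (hρu : ρ < 1) (hρ2 : ρ = (μ₁ + μ₂) / (2 * μ₂)) :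
    Real.sqrt (2 * (1 - ρ) / (μ₁ ^ 2 + μ₂ ^ 2 - 2 * ρ * μ₁ * μ₂)) = 1 / μ₂ ∧
    IsLeast { v : ℝ | ∃ t s : ℝ, 0 < t ∧ 0 < s ∧ v = gFun μ₁ μ₂ ρ t s } (4 * μ₂) ∧
    gFun μ₁ μ₂ ρ (1 / μ₂) (1 / μ₂) = 4 * μ₂ ∧
    g2Fun μ₂ (1 / μ₂) = 4 * μ₂ ∧
    (∀ s : ℝ, 0 < s → 4 * μ₂ ≤ g2Fun μ₂ s) ∧
    (∀ s : ℝ, 0 < s → g2Fun μ₂ s = 4 * μ₂ → s = 1 / μ₂) := by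
  have hμ2 : 0 < μ₂ := lt_trans hμ1 hμ12
  have hμ2' : μ₂ ≠ 0 := ne_of_gt hμ2
  have hsub : μ₂ - μ₁ ≠ 0 := sub_ne_zero.mpr (ne_of_gt hμ12)
  have ht0 : (0 : ℝ) < 1 / μ₂ := by positivity
  -- the value of gFun at (1/μ₂, 1/μ₂)
  have hgval : gFun μ₁ μ₂ ρ (1 / μ₂) (1 / μ₂) = 4 * μ₂ := by
    refine le_antisymm ?_ (gFun_ge μ₁ μ₂ ρ _ _ hμ1 hμ2 ht0 ht0 hρl hρu)
    apply csInf_le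
    · refine ⟨4 * μ₂, ?_⟩
      rintro b ⟨x, y, hx, hy, rfl⟩
      exact quadF_ge μ₂ ρ _ _ x y hμ2 ht0 ht0 hρl hρu hy
    · refine ⟨1 + μ₁ * (1 / μ₂), 1 + μ₂ * (1 / μ₂), le_refl _, le_refl _, ?_⟩
      have hd := det_pos ρ (1 / μ₂) (1 / μ₂) ht0 ht0 hρl hρu
      rw [min_self] at hd
      rw [quadF_eq, min_self, eq_comm, div_eq_iff (ne_of_gt hd), hρ2]
      field_simp
      ring
  refine ⟨?_, ⟨⟨1 / μ₂, 1 / μ₂, ht0, ht0, hgval.symm⟩, ?_⟩, hgval, ?_, ?_, ?_⟩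
  · -- sqrt computation
    have hden : μ₁ ^ 2 + μ₂ ^ 2 - 2 * ρ * μ₁ * μ₂ = μ₂ * (μ₂ - μ₁) := by
      rw [hρ2]; field_simp; ring
    have hnum : 2 * (1 - ρ) = (μ₂ - μ₁) / μ₂ := by
      rw [hρ2]; field_simp; ring
    have harg : 2 * (1 - ρ) / (μ₁ ^ 2 + μ₂ ^ 2 - 2 * ρ * μ₁ * μ₂) = (1 / μ₂) ^ 2 := by
      rw [hden, hnum]
      field_simp
    rw [harg, Real.sqrt_sq ht0.le]
  · rintro v ⟨t, s, ht, hs, rfl⟩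
    exact gFun_ge μ₁ μ₂ ρ t s hμ1 hμ2 ht hs hρl hρu
  · rw [g2Fun, one_div, mul_inv_cancel₀ hμ2']; field_simp; norm_num
  · exact fun s hs => g2_ge μ₂ s hμ2 hs
  · intro s hs hg
    rw [g2Fun, div_eq_iff (ne_of_gt hs)] at hg
    have : (1 - μ₂ * s) ^ 2 = 0 := by nlinarith
    have h1 : μ₂ * s = 1 := by nlinarith [sq_eq_zero_iff.mp this]
    field_simp
    linarith
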